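/- If the nonnegative measure σ on [-π,π] is nonatomic (continuous distribution function), then lim_{N→∞} (1/N) ‖Q_N‖₂ = 0, where Q_N = (b(j-k))_{j,k=0}^{N-1} and b are the trigonometric moments of σ. -/

import Mathlib

open MeasureTheory Real Filter

theorem hs_norm_o_N_of_nonatomic
    (μ : Measure ℝ) [IsFiniteMeasure μ] (hsupp : μ (Set.Icc (-π) π)ᶜ = 0)
    (hna : ∀ x : ℝ, μ {x} = 0)
    (b : ℤ → ℂ) (hb : ∀ t : ℤ, b t = ∫ θ : ℝ, Complex.exp (Complex.I * (t : ℂ) * (θ : ℂ)) ∂μ) :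
    Tendsto
      (fun N : ℕ =>
        Real.sqrt (∑ j : Fin N, ∑ k : Fin N, ‖b ((j : ℤ) - (k : ℤ))‖ ^ 2) / (N : ℝ))
      atTop (nhds 0) := by
  haveI : NullSingletonClass μ := ⟨hna⟩
  set ν : Measure (ℝ × ℝ) := μ.prod μ with hν
  set S : ℕ → ℝ := fun N => ∑ j : Fin N, ∑ k : Fin N, ‖b ((j : ℤ) - (k : ℤ))‖ ^ 2 with hS
  set D : ℕ → ℝ × ℝ → ℂ :=
    fun N z => ∑ j : Fin N, Complex.exp (Complex.I * (j : ℂ) * ((z.1 : ℂ) - (z.2 : ℂ))) with hD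
  -- norm of exponentials
  have hnorm : ∀ (t : ℤ) (x : ℝ), ‖Complex.exp (Complex.I * (t:ℂ) * (x:ℂ))‖ = 1 := by
    intro t x; simp [Complex.norm_exp]
  -- integrability of the product exponentials
  have hint : ∀ t : ℤ, Integrable
      (fun z : ℝ × ℝ => Complex.exp (Complex.I * (t:ℂ) * (z.1:ℂ)) *
        Complex.exp (-(Complex.I * (t:ℂ) * (z.2:ℂ)))) ν := by
    intro t
    apply (integrable_const (1:ℝ)).mono'
    · apply Continuous.aestronglyMeasurable; fun_prop
    · refine ae_of_all _ fun z => ?_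
      rw [norm_mul, hnorm t z.1]
      have : ‖Complex.exp (-(Complex.I * (t:ℂ) * (z.2:ℂ)))‖ = 1 := by
        simp [Complex.norm_exp]
      rw [this]; norm_num
  -- key pointwise identity for b t
  have hbt : ∀ t : ℤ, ((‖b t‖^2 : ℝ) : ℂ) =
      ∫ z : ℝ × ℝ, Complex.exp (Complex.I * (t:ℂ) * (z.1:ℂ)) *
        Complex.exp (-(Complex.I * (t:ℂ) * (z.2:ℂ))) ∂ν := by
    intro t
    rw [hν, integral_prod_mul (f := fun x : ℝ => Complex.exp (Complex.I * (t:ℂ) * (x:ℂ)))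
      (g := fun y : ℝ => Complex.exp (-(Complex.I * (t:ℂ) * (y:ℂ)))), ← hb t]
    have h2 : (∫ y : ℝ, Complex.exp (-(Complex.I * (t:ℂ) * (y:ℂ))) ∂μ) = (starRingEnd ℂ) (b t) := by
      rw [hb t, ← integral_conj]
      congr 1; ext y
      rw [← Complex.exp_conj]; congr 1; simp
    rw [h2, Complex.mul_conj]
    norm_cast
    simp [Complex.normSq_eq_norm_sq]
  -- pointwise product identity
  have ptwise : ∀ (N : ℕ) (z : ℝ × ℝ),
      (∑ j : Fin N, ∑ k : Fin N,
        Complex.exp (Complex.I * (((j:ℤ) - (k:ℤ) : ℤ) : ℂ) * (z.1:ℂ)) *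
          Complex.exp (-(Complex.I * (((j:ℤ) - (k:ℤ) : ℤ) : ℂ) * (z.2:ℂ))))
      = ((‖D N z‖^2 : ℝ) : ℂ) := by
    intro N z
    have h1 : ∀ j k : Fin N,
        Complex.exp (Complex.I * (((j:ℤ) - (k:ℤ) : ℤ) : ℂ) * (z.1:ℂ)) *
          Complex.exp (-(Complex.I * (((j:ℤ) - (k:ℤ) : ℤ) : ℂ) * (z.2:ℂ)))
        = Complex.exp (Complex.I * (j:ℂ) * ((z.1:ℂ) - (z.2:ℂ))) *
            (starRingEnd ℂ) (Complex.exp (Complex.I * (k:ℂ) * ((z.1:ℂ) - (z.2:ℂ)))) := by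
      intro j k
      rw [← Complex.exp_conj]
      rw [← Complex.exp_add, ← Complex.exp_add]
      congr 1
      simp only [map_mul, map_sub, Complex.conj_I, Complex.conj_natCast, Complex.conj_ofReal]
      push_cast
      ring
    simp only [h1, hD]
    rw [← Finset.sum_mul_sum, ← map_sum]
    rw [Complex.mul_conj]
    norm_cast
    simp [Complex.normSq_eq_norm_sq]
  -- the key integral formula
  have key : ∀ N : ℕ, S N = ∫ z : ℝ × ℝ, ‖D N z‖^2 ∂ν := by
    intro N
    have hC : ((S N : ℝ) : ℂ) = ((∫ z : ℝ × ℝ, ‖D N z‖^2 ∂ν : ℝ) : ℂ) := by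
      rw [hS]
      calc ((∑ j : Fin N, ∑ k : Fin N, ‖b ((j:ℤ) - (k:ℤ))‖^2 : ℝ) : ℂ)
          = ∑ j : Fin N, ∑ k : Fin N, ((‖b ((j:ℤ) - (k:ℤ))‖^2 : ℝ) : ℂ) := by
            simp [Complex.ofReal_sum]
        _ = ∑ j : Fin N, ∑ k : Fin N, ∫ z : ℝ × ℝ,
              Complex.exp (Complex.I * (((j:ℤ) - (k:ℤ) : ℤ) : ℂ) * (z.1:ℂ)) *
                Complex.exp (-(Complex.I * (((j:ℤ) - (k:ℤ) : ℤ) : ℂ) * (z.2:ℂ))) ∂ν := by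
            exact Finset.sum_congr rfl fun j _ => Finset.sum_congr rfl fun k _ => hbt _
        _ = ∑ j : Fin N, ∫ z : ℝ × ℝ, ∑ k : Fin N,
              Complex.exp (Complex.I * (((j:ℤ) - (k:ℤ) : ℤ) : ℂ) * (z.1:ℂ)) *
                Complex.exp (-(Complex.I * (((j:ℤ) - (k:ℤ) : ℤ) : ℂ) * (z.2:ℂ))) ∂ν := by
            exact Finset.sum_congr rfl fun j _ =>
              (integral_finset_sum _ fun k _ => hint _).symm
        _ = ∫ z : ℝ × ℝ, ∑ j : Fin N, ∑ k : Fin N,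
              Complex.exp (Complex.I * (((j:ℤ) - (k:ℤ) : ℤ) : ℂ) * (z.1:ℂ)) *
                Complex.exp (-(Complex.I * (((j:ℤ) - (k:ℤ) : ℤ) : ℂ) * (z.2:ℂ))) ∂ν := by
            exact (integral_finset_sum _ fun j _ =>
              integrable_finset_sum _ fun k _ => hint _).symm
        _ = ∫ z : ℝ × ℝ, ((‖D N z‖^2 : ℝ) : ℂ) ∂ν :=
            integral_congr_ae (ae_of_all _ fun z => ptwise N z)
        _ = ((∫ z : ℝ × ℝ, ‖D N z‖^2 ∂ν : ℝ) : ℂ) := integral_ofReal (f := fun z => ‖D N z‖^2)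
    exact_mod_cast hC
  -- nonnegativity of S
  have hSnn : ∀ N, 0 ≤ S N := by
    intro N; rw [hS]
    exact Finset.sum_nonneg fun j _ => Finset.sum_nonneg fun k _ => by positivity
  -- the bad set has measure zero
  set E : Set (ℝ × ℝ) :=
    {z : ℝ × ℝ | Complex.exp (Complex.I * ((z.1 : ℂ) - (z.2 : ℂ))) = 1} with hE
  have hEmeas : MeasurableSet E := by
    have : Continuous fun z : ℝ × ℝ => Complex.exp (Complex.I * ((z.1 : ℂ) - (z.2 : ℂ))) := by
      fun_prop
    exact this.measurable (measurableSet_singleton 1)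
  have hEnull : ν E = 0 := by
    rw [hν, MeasureTheory.Measure.measure_prod_null hEmeas]
    refine ae_of_all _ fun x => ?_
    have hsub : (Prod.mk x ⁻¹' E) ⊆ Set.range (fun n : ℤ => x - 2 * π * n) := by
      intro y hy
      simp only [hE, Set.mem_preimage, Set.mem_setOf_eq] at hy
      rw [Complex.exp_eq_one_iff] at hy
      obtain ⟨n, hn⟩ := hy
      refine ⟨n, ?_⟩
      have : ((x : ℂ) - y) = (n : ℂ) * (2 * π) := by
        apply mul_left_cancel₀ Complex.I_ne_zero
        rw [hn]; ring
      have hxy : x - y = n * (2 * π) := by exact_mod_cast this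
      show x - 2 * π * (n : ℝ) = y
      linarith [hxy]
    exact measure_mono_null hsub ((Set.countable_range _).measure_zero μ)
  -- pointwise convergence off E
  have hlim : ∀ᵐ z ∂ν, Tendsto (fun N => ‖D N z‖^2 / (N : ℝ)^2) atTop (nhds 0) := by
    have hae : ∀ᵐ z ∂ν, z ∉ E := (measure_eq_zero_iff_ae_notMem.mp hEnull)
    refine hae.mono fun z hz => ?_
    · set r : ℂ := Complex.exp (Complex.I * ((z.1 : ℂ) - (z.2 : ℂ))) with hr
      have hr1 : r ≠ 1 := hz
      have hrn : ‖r‖ = 1 := by rw [hr]; simp [Complex.norm_exp]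
      have hDgeom : ∀ N : ℕ, D N z = (r ^ N - 1) / (r - 1) := by
        intro N
        rw [hD]
        simp only
        rw [Fin.sum_univ_eq_sum_range (fun j : ℕ =>
          Complex.exp (Complex.I * (j : ℂ) * ((z.1 : ℂ) - (z.2 : ℂ))))]
        rw [← geom_sum_eq hr1 N]
        refine Finset.sum_congr rfl fun j _ => ?_
        rw [hr, ← Complex.exp_nat_mul]
        congr 1; ring
      have hDb : ∀ N : ℕ, ‖D N z‖ ≤ 2 / ‖r - 1‖ := by
        intro N
        rw [hDgeom N, norm_div]
        gcongr
        calc ‖r ^ N - 1‖ ≤ ‖r ^ N‖ + ‖(1 : ℂ)‖ := norm_sub_le _ _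
          _ = 2 := by rw [norm_pow, hrn]; norm_num
      have hCb : ∀ N : ℕ, ‖D N z‖^2 / (N : ℝ)^2 ≤ (2 / ‖r - 1‖)^2 / (N : ℝ)^2 := by
        intro N
        rcases Nat.eq_zero_or_pos N with h0 | h0
        · subst h0; simp
        · apply div_le_div_of_nonneg_right ?_ (by positivity)
          · exact pow_le_pow_left₀ (norm_nonneg _) (hDb N) 2
      refine squeeze_zero (fun N => by positivity) hCb ?_
      have hN2 : Tendsto (fun N : ℕ => ((N : ℝ))^2) atTop atTop :=
        (tendsto_pow_atTop (two_ne_zero)).comp tendsto_natCast_atTop_atTop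
      exact Tendsto.div_atTop tendsto_const_nhds hN2
  -- dominated convergence
  have hdom : Tendsto (fun N => ∫ z : ℝ × ℝ, ‖D N z‖^2 / (N : ℝ)^2 ∂ν) atTop (nhds 0) := by
    have h0 : (0 : ℝ) = ∫ _ : ℝ × ℝ, (0 : ℝ) ∂ν := by simp
    rw [h0]
    refine tendsto_integral_of_dominated_convergence (fun _ => (1 : ℝ)) ?_ ?_ ?_ hlim
    · intro n
      apply Continuous.aestronglyMeasurable
      fun_prop
    · exact integrable_const 1
    · intro n
      refine ae_of_all _ fun z => ?_
      rcases Nat.eq_zero_or_pos n with h0 | h0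
      · subst h0; simp [hD]
      · have hb1 : ‖D n z‖ ≤ (n : ℝ) := by
          rw [hD]
          simp only
          calc ‖∑ j : Fin n, Complex.exp (Complex.I * (j : ℂ) * ((z.1 : ℂ) - (z.2 : ℂ)))‖
              ≤ ∑ j : Fin n, ‖Complex.exp (Complex.I * (j : ℂ) * ((z.1 : ℂ) - (z.2 : ℂ)))‖ :=
                norm_sum_le _ _
            _ = (n : ℝ) := by
                have : ∀ j : Fin n, ‖Complex.exp (Complex.I * (j : ℂ) * ((z.1 : ℂ) - (z.2 : ℂ)))‖ = 1 := by
                  intro j; simp [Complex.norm_exp]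
                simp [this]
        have : ‖D n z‖^2 / (n : ℝ)^2 ≤ 1 := by
          rw [div_le_one (by positivity)]
          exact pow_le_pow_left₀ (norm_nonneg _) hb1 2
        rw [Real.norm_eq_abs, abs_of_nonneg (by positivity)]
        exact this
  -- conclude
  have hSdiv : Tendsto (fun N => S N / (N : ℝ)^2) atTop (nhds 0) := by
    refine hdom.congr fun N => ?_
    rw [key N, integral_div]
  have hsq : Tendsto (fun N => Real.sqrt (S N / (N : ℝ)^2)) atTop (nhds 0) := by
    have h := (Real.continuous_sqrt.tendsto 0).comp hSdiv
    rw [Real.sqrt_zero] at h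
    exact h
  refine hsq.congr fun N => ?_
  rw [Real.sqrt_div (hSnn N), Real.sqrt_sq (Nat.cast_nonneg N)]
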